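/- For every integer k ≥ 1, the following identity of formal power series over ℤ holds: (1 − X)^{k+1} · Σ_{p≥0} g(k,p) X^p = 2·(1 + X)^{k−1}, where g(k,p) is the number of lattice points in a maximal L¹-ball of odd diameter 2p+1 in ℤ^k. Equivalently, the generating function Σ_{p≥0} g(k,p) X^p equals 2(1+X)^{k−1}/(1−X)^{k+1}. -/

import Mathlib

open Finset

/-- `latticeBallOdd k p hk` is the number of lattice points `x ∈ ℤ^k` with
`|2 x₁ - 1| + ∑_{i ≥ 2} 2 |x i| ≤ 2p + 1`, i.e. the number of lattice points in a
maximal L¹-ball of odd diameter `2p+1` (radius `p + 1/2`, centered at the midpoint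
`(1/2, 0, …, 0)` of a lattice edge). -/
noncomputable def latticeBallOdd (k p : ℕ) (hk : 0 < k) : ℕ :=
  Set.ncard {x : Fin k → ℤ |
    |2 * x ⟨0, hk⟩ - 1| + ∑ i ∈ Finset.univ.erase (⟨0, hk⟩ : Fin k), 2 * |x i| ≤ 2 * (p : ℤ) + 1}

def lbCond (k p : ℕ) (hk : 0 < k) (x : Fin k → ℤ) : Prop :=
  |2 * x ⟨0, hk⟩ - 1| + ∑ i ∈ Finset.univ.erase (⟨0, hk⟩ : Fin k), 2 * |x i| ≤ 2 * (p : ℤ) + 1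

instance (k p : ℕ) (hk : 0 < k) : DecidablePred (lbCond k p hk) := fun x => by
  unfold lbCond; infer_instance

noncomputable def ballF (k p : ℕ) (hk : 0 < k) : Finset (Fin k → ℤ) :=
  (Finset.Icc (fun _ => -((p : ℤ) + 1)) (fun _ => (p : ℤ) + 1)).filter (lbCond k p hk)

lemma mem_ballF {k p : ℕ} {hk : 0 < k} {x : Fin k → ℤ} :
    x ∈ ballF k p hk ↔ lbCond k p hk x := by
  constructor
  · intro h; exact (Finset.mem_filter.mp h).2
  · intro h
    have h' : |2 * x ⟨0, hk⟩ - 1| + ∑ i ∈ Finset.univ.erase (⟨0, hk⟩ : Fin k), 2 * |x i|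
        ≤ 2 * (p : ℤ) + 1 := h
    have hb : ∀ i, -((p : ℤ) + 1) ≤ x i ∧ x i ≤ (p : ℤ) + 1 := by
      intro i
      have hodd : (1 : ℤ) ≤ |2 * x ⟨0, hk⟩ - 1| := Int.one_le_abs (by omega)
      have hnn : (0 : ℤ) ≤ ∑ i ∈ Finset.univ.erase (⟨0, hk⟩ : Fin k), 2 * |x i| :=
        Finset.sum_nonneg fun i _ => by positivity
      by_cases hi : i = ⟨0, hk⟩
      · subst hi
        have h0 := abs_le.mp (show |2 * x ⟨0, hk⟩ - 1| ≤ 2 * (p : ℤ) + 1 by omega)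
        omega
      · have hmem : i ∈ Finset.univ.erase (⟨0, hk⟩ : Fin k) :=
          Finset.mem_erase.mpr ⟨hi, Finset.mem_univ i⟩
        have hle : 2 * |x i| ≤ ∑ j ∈ Finset.univ.erase (⟨0, hk⟩ : Fin k), 2 * |x j| :=
          Finset.single_le_sum (f := fun j => 2 * |x j|) (fun j _ => by positivity) hmem
        have h0 := abs_le.mp (show |x i| ≤ (p : ℤ) by omega)
        omega
    exact Finset.mem_filter.mpr
      ⟨Finset.mem_Icc.mpr ⟨fun i => (hb i).1, fun i => (hb i).2⟩, h⟩

lemma latticeBallOdd_eq_card (k p : ℕ) (hk : 0 < k) :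
    latticeBallOdd k p hk = (ballF k p hk).card := by
  rw [latticeBallOdd, ← Set.ncard_coe_finset]
  congr 1
  ext x
  simp only [Set.mem_setOf_eq, Finset.mem_coe, mem_ballF, lbCond]

lemma card_ballF_one (p : ℕ) (hk : 0 < 1) : (ballF 1 p hk).card = 2 * p + 2 := by
  have herase : (Finset.univ.erase (⟨0, hk⟩ : Fin 1)) = ∅ := by
    ext i
    simp [Subsingleton.elim i ⟨0, hk⟩]
  have hmem : ∀ x : Fin 1 → ℤ, x ∈ ballF 1 p hk ↔ x ⟨0, hk⟩ ∈ Finset.Icc (-(p : ℤ)) ((p : ℤ) + 1) := by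
    intro x
    rw [mem_ballF, lbCond, herase]
    simp only [Finset.sum_empty, add_zero, Finset.mem_Icc]
    rw [abs_le]
    omega
  have hcard : (ballF 1 p hk).card = (Finset.Icc (-(p : ℤ)) ((p : ℤ) + 1)).card := by
    refine Finset.card_bij' (fun x _ => x ⟨0, hk⟩) (fun a _ => fun _ => a) ?_ ?_ ?_ ?_
    · intro x hx
      exact (hmem x).mp hx
    · intro a ha
      exact (hmem _).mpr ha
    · intro x hx
      funext i
      exact congrArg x (Subsingleton.elim _ _)
    · intro a ha
      rfl
  rw [hcard, Int.card_Icc]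
  omega

lemma erase_sum_eq {k : ℕ} (hk : 0 < k) (f : Fin k → ℤ) :
    ∑ i ∈ Finset.univ.erase (⟨0, hk⟩ : Fin k), f i = (∑ i : Fin k, f i) - f ⟨0, hk⟩ :=
  eq_sub_of_add_eq (Finset.sum_erase_add _ _ (Finset.mem_univ _))

lemma lbCond_snoc {k p : ℕ} (hk : 0 < k) (hk' : 0 < k + 1) (y : Fin k → ℤ) (a : ℤ)
    (ha : a.natAbs ≤ p) :
    lbCond (k + 1) p hk' (Fin.snoc y a) ↔ lbCond k (p - a.natAbs) hk y := by
  have h0 : (⟨0, hk'⟩ : Fin (k + 1)) = Fin.castSucc ⟨0, hk⟩ := rfl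
  have hz : (Fin.snoc y a : Fin (k + 1) → ℤ) ⟨0, hk'⟩ = y ⟨0, hk⟩ := by
    rw [h0, Fin.snoc_castSucc]
  have hsum : ∑ i : Fin (k + 1), 2 * |(Fin.snoc y a : Fin (k + 1) → ℤ) i|
      = (∑ i : Fin k, 2 * |y i|) + 2 * |a| := by
    rw [Fin.sum_univ_castSucc]
    simp [Fin.snoc_castSucc, Fin.snoc_last]
  rw [lbCond, lbCond, erase_sum_eq hk', erase_sum_eq hk, hsum, hz]
  rw [Int.abs_eq_natAbs a]
  have hc : ((p - a.natAbs : ℕ) : ℤ) = (p : ℤ) - (a.natAbs : ℤ) := by omega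
  rw [hc]
  omega

lemma card_rec (k p : ℕ) (hk : 0 < k) (hk' : 0 < k + 1) :
    (ballF (k + 1) p hk').card
      = ∑ a ∈ Finset.Icc (-(p : ℤ)) (p : ℤ), (ballF k (p - a.natAbs) hk).card := by
  have hmap : ∀ x ∈ ballF (k + 1) p hk', x (Fin.last k) ∈ Finset.Icc (-(p : ℤ)) (p : ℤ) := by
    intro x hx
    have hc : lbCond (k + 1) p hk' x := mem_ballF.mp hx
    rw [lbCond] at hc
    have hodd : (1 : ℤ) ≤ |2 * x ⟨0, hk'⟩ - 1| := Int.one_le_abs (by omega)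
    have hlast : Fin.last k ∈ Finset.univ.erase (⟨0, hk'⟩ : Fin (k + 1)) := by
      refine Finset.mem_erase.mpr ⟨?_, Finset.mem_univ _⟩
      intro hcon
      have := congrArg Fin.val hcon
      simp [Fin.last] at this
      omega
    have hle : 2 * |x (Fin.last k)| ≤ ∑ j ∈ Finset.univ.erase (⟨0, hk'⟩ : Fin (k + 1)), 2 * |x j| :=
      Finset.single_le_sum (f := fun j => 2 * |x j|) (fun j _ => by positivity) hlast
    have hnn : (0 : ℤ) ≤ ∑ i ∈ Finset.univ.erase (⟨0, hk'⟩ : Fin (k + 1)), 2 * |x i| :=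
      Finset.sum_nonneg fun i _ => by positivity
    have := abs_le.mp (show |x (Fin.last k)| ≤ (p : ℤ) by omega)
    rw [Finset.mem_Icc]
    omega
  rw [Finset.card_eq_sum_card_fiberwise hmap]
  refine Finset.sum_congr rfl ?_
  intro a ha
  rw [Finset.mem_Icc] at ha
  have hna : a.natAbs ≤ p := by omega
  refine Finset.card_bij' (fun x _ => Fin.init x) (fun y _ => Fin.snoc y a) ?_ ?_ ?_ ?_
  · intro x hx
    rw [Finset.mem_filter] at hx
    obtain ⟨hx1, hx2⟩ := hx
    have hc : lbCond (k + 1) p hk' x := mem_ballF.mp hx1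
    rw [mem_ballF]
    rw [← lbCond_snoc hk hk' (Fin.init x) a hna]
    rw [show (Fin.snoc (Fin.init x) a : Fin (k + 1) → ℤ) = x by
      rw [← hx2]; exact Fin.snoc_init_self x]
    exact hc
  · intro y hy
    rw [Finset.mem_filter]
    constructor
    · rw [mem_ballF]
      exact (lbCond_snoc hk hk' y a hna).mpr (mem_ballF.mp hy)
    · exact Fin.snoc_last _ _
  · intro x hx
    rw [Finset.mem_filter] at hx
    show Fin.snoc (Fin.init x) a = x
    rw [← hx.2]
    exact Fin.snoc_init_self x
  · intro y hy
    beta_reduce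
    exact Fin.init_snoc (α := fun _ : Fin (k+1) => ℤ) (p := y) (x := a)

lemma sum_Icc_natAbs (p : ℕ) (f : ℕ → ℕ) :
    ∑ a ∈ Finset.Icc (-(p : ℤ)) (p : ℤ), f a.natAbs
      = f 0 + 2 * ∑ j ∈ Finset.range p, f (j + 1) := by
  induction p with
  | zero => simp
  | succ p ih =>
    have hins : Finset.Icc (-((p : ℤ) + 1)) ((p : ℤ) + 1)
        = insert (-((p : ℤ) + 1)) (insert ((p : ℤ) + 1) (Finset.Icc (-(p : ℤ)) (p : ℤ))) := by
      ext a
      simp only [Finset.mem_Icc, Finset.mem_insert]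
      omega
    rw [show ((p + 1 : ℕ) : ℤ) = (p : ℤ) + 1 by push_cast; ring, hins]
    rw [Finset.sum_insert (by simp only [Finset.mem_insert, Finset.mem_Icc]; omega)]
    rw [Finset.sum_insert (by simp only [Finset.mem_Icc]; omega)]
    rw [ih]
    have h1 : ((-((p : ℤ) + 1)).natAbs) = p + 1 := by omega
    have h2 : (((p : ℤ) + 1).natAbs) = p + 1 := by omega
    rw [h1, h2, Finset.sum_range_succ]
    ring

lemma g_rec (k p : ℕ) (hk : 0 < k) (hk' : 0 < k + 1) :
    latticeBallOdd (k + 1) p hk'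
      = latticeBallOdd k p hk + 2 * ∑ j ∈ Finset.range p, latticeBallOdd k j hk := by
  rw [latticeBallOdd_eq_card, card_rec k p hk hk',
    sum_Icc_natAbs p (fun n => (ballF k (p - n) hk).card)]
  have h1 : ∑ j ∈ Finset.range p, (ballF k (p - (j + 1)) hk).card
      = ∑ j ∈ Finset.range p, (ballF k j hk).card := by
    rw [← Finset.sum_range_reflect (fun j => (ballF k j hk).card) p]
    refine Finset.sum_congr rfl ?_
    intro j hj
    have : p - (j + 1) = p - 1 - j := by omega
    rw [this]
  rw [h1, Nat.sub_zero]
  congr 1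
  · exact (latticeBallOdd_eq_card k p hk).symm
  · congr 1
    refine Finset.sum_congr rfl fun j _ => (latticeBallOdd_eq_card k j hk).symm

open PowerSeries in
lemma ps_step (k : ℕ) (hk : 0 < k) (hk' : 0 < k + 1) :
    (1 - (X : ℤ⟦X⟧)) * PowerSeries.mk (fun p => (latticeBallOdd (k + 1) p hk' : ℤ))
      = (1 + (X : ℤ⟦X⟧)) * PowerSeries.mk (fun p => (latticeBallOdd k p hk : ℤ)) := by
  ext n
  rw [sub_mul, add_mul, one_mul, one_mul, map_sub, map_add]
  cases n with
  | zero =>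
    simp only [PowerSeries.coeff_zero_eq_constantCoeff, map_mul, constantCoeff_X, zero_mul,
      sub_zero, add_zero, PowerSeries.constantCoeff_mk]
    have := g_rec k 0 hk hk'
    simp only [Finset.range_zero, Finset.sum_empty, Nat.mul_zero, Nat.add_zero] at this
    exact_mod_cast this
  | succ n =>
    rw [PowerSeries.coeff_succ_X_mul, PowerSeries.coeff_succ_X_mul,
      PowerSeries.coeff_mk, PowerSeries.coeff_mk, PowerSeries.coeff_mk, PowerSeries.coeff_mk]
    have h1 := g_rec k (n + 1) hk hk'
    have h2 := g_rec k n hk hk'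
    rw [Finset.sum_range_succ] at h1
    push_cast [h1, h2]
    ring

open PowerSeries in
lemma ps_base (hk : 0 < 1) :
    (1 - (X : ℤ⟦X⟧)) ^ 2 * PowerSeries.mk (fun p => (latticeBallOdd 1 p hk : ℤ)) = 2 := by
  have hg : ∀ p, (latticeBallOdd 1 p hk : ℤ) = 2 * p + 2 := by
    intro p
    rw [latticeBallOdd_eq_card, card_ballF_one]
    push_cast
    ring
  have h1 : (1 - (X : ℤ⟦X⟧)) * PowerSeries.mk (fun p => (latticeBallOdd 1 p hk : ℤ))
      = PowerSeries.mk (fun _ => (2 : ℤ)) := by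
    ext n
    rw [sub_mul, one_mul, map_sub]
    cases n with
    | zero =>
      simp only [PowerSeries.coeff_zero_eq_constantCoeff, map_mul, constantCoeff_X, zero_mul,
        sub_zero, PowerSeries.constantCoeff_mk]
      rw [hg 0]
      norm_num
    | succ n =>
      rw [PowerSeries.coeff_succ_X_mul, PowerSeries.coeff_mk, PowerSeries.coeff_mk,
        PowerSeries.coeff_mk, hg, hg]
      push_cast
      ring
  rw [sq, mul_assoc, h1]
  ext n
  rw [sub_mul, one_mul, map_sub]
  cases n with
  | zero =>
    simp only [PowerSeries.coeff_zero_eq_constantCoeff, map_mul, constantCoeff_X, zero_mul,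
      sub_zero, PowerSeries.constantCoeff_mk]
    rw [show (constantCoeff (2 : ℤ⟦X⟧) : ℤ) = ((2 : ℤ⟦X⟧) |>.constantCoeff) from rfl]
    rw [show (2 : ℤ⟦X⟧) = PowerSeries.C (2 : ℤ) from (map_ofNat _ 2).symm,
      PowerSeries.constantCoeff_C]
  | succ n =>
    rw [PowerSeries.coeff_succ_X_mul, PowerSeries.coeff_mk, PowerSeries.coeff_mk]
    rw [show (2 : ℤ⟦X⟧) = PowerSeries.C (2 : ℤ) from (map_ofNat _ 2).symm,
      PowerSeries.coeff_C]
    simp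

/-- For every `k ≥ 1`, in `ℤ⟦X⟧` one has
`(1 − X)^{k+1} · ∑_{p≥0} g(k,p) Xᵖ = 2·(1 + X)^{k−1}`, i.e. the generating function of the
lattice-point counts of maximal odd-diameter L¹-balls in `ℤ^k` is `2(1+X)^{k−1}/(1−X)^{k+1}`. -/
theorem latticeBallOdd_genFun (k : ℕ) (hk : 1 ≤ k) :
    (1 - (PowerSeries.X : PowerSeries ℤ)) ^ (k + 1) *
        PowerSeries.mk (fun p => (latticeBallOdd k p hk : ℤ)) =
      2 * (1 + (PowerSeries.X : PowerSeries ℤ)) ^ (k - 1) := by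
  induction k, hk using Nat.le_induction with
  | base =>
    simpa using ps_base one_pos
  | succ k hk ih =>
    have hstep := ps_step k hk (Nat.succ_pos k)
    have hrw : (1 - (PowerSeries.X : PowerSeries ℤ)) ^ (k + 1 + 1) *
        PowerSeries.mk (fun p => (latticeBallOdd (k + 1) p (Nat.succ_pos k) : ℤ))
        = (1 - (PowerSeries.X : PowerSeries ℤ)) ^ (k + 1) *
          ((1 - (PowerSeries.X : PowerSeries ℤ)) *
            PowerSeries.mk (fun p => (latticeBallOdd (k + 1) p (Nat.succ_pos k) : ℤ))) := by
      ring
    calc (1 - (PowerSeries.X : PowerSeries ℤ)) ^ (k + 1 + 1) *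
          PowerSeries.mk (fun p => (latticeBallOdd (k + 1) p _ : ℤ))
        = (1 + (PowerSeries.X : PowerSeries ℤ)) *
          ((1 - (PowerSeries.X : PowerSeries ℤ)) ^ (k + 1) *
            PowerSeries.mk (fun p => (latticeBallOdd k p hk : ℤ))) := by
          rw [hrw, hstep]; ring
      _ = 2 * (1 + (PowerSeries.X : PowerSeries ℤ)) ^ (k + 1 - 1) := by
          rw [ih]
          have : k + 1 - 1 = (k - 1) + 1 := by omega
          rw [this, pow_succ]
          ring
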